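/- Let R be a commutative ring, u, v ∈ R, and l ≥ 1. Let A be an l × (l−1) matrix over R and let β, γ ∈ R^l be column vectors. Let M be the (l+2) × (l+2) matrix over R whose first row is (u, 0, −u, 0, …, 0), whose second row is (−1, v, 0, 0, …, 0), and whose (i+2)-nd row (for 1 ≤ i ≤ l) is (β_i, 0, γ_i, A_{i,1}, …, A_{i,l−1}). Then det M = uv · det M′, where M′ is the l × l matrix whose first column is β + γ and whose remaining columns are the columns of A. (This is the effect of a Reidemeister (Ia) move on the Alexander matrix of a virtual knot diagram.) -/

import Mathlib

theorem coe_succAbove_one (n : ℕ) (x : Fin (n+1)) :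
    (((1:Fin (n+2)).succAbove x : Fin (n+2)) : ℕ) = if (x:ℕ) = 0 then 0 else (x:ℕ)+1 := by
  rcases Nat.eq_zero_or_pos (x:ℕ) with h | h
  · have : x = 0 := Fin.ext h
    subst this
    rw [Fin.succAbove_of_castSucc_lt]
    · simp
    · simp [Fin.lt_def]
  · rw [Fin.succAbove_of_le_castSucc]
    · simp [Fin.val_succ, Nat.pos_iff_ne_zero.mp h]
    · simp [Fin.le_def]; omega

theorem reidemeister_Ia_det {R : Type*} [CommRing R] (u v : R) (l : ℕ) (hl : 1 ≤ l)
    (A : Matrix (Fin l) (Fin (l - 1)) R) (β γ : Fin l → R)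
    (M : Matrix (Fin (l + 2)) (Fin (l + 2)) R)
    (M' : Matrix (Fin l) (Fin l) R)
    (hM : M = Matrix.of fun (i j : Fin (l + 2)) =>
      if (i : ℕ) = 0 then
        (if (j : ℕ) = 0 then u else if (j : ℕ) = 2 then -u else 0)
      else if (i : ℕ) = 1 then
        (if (j : ℕ) = 0 then -1 else if (j : ℕ) = 1 then v else 0)
      else
        (if h0 : (j : ℕ) = 0 then β ⟨(i : ℕ) - 2, by omega⟩
         else if h1 : (j : ℕ) = 1 then 0
         else if h2 : (j : ℕ) = 2 then γ ⟨(i : ℕ) - 2, by omega⟩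
         else A ⟨(i : ℕ) - 2, by omega⟩ ⟨(j : ℕ) - 3, by omega⟩))
    (hM' : M' = Matrix.of fun (i j : Fin l) =>
      if h : (j : ℕ) = 0 then β i + γ i
      else A i ⟨(j : ℕ) - 1, by omega⟩) :
    M.det = u * v * M'.det := by
  have hv1 : ((1 : Fin (l+1)) : ℕ) = 1 := by
    rw [Fin.val_one']; exact Nat.mod_eq_of_lt (by omega)
  have h10 : (1 : Fin (l+1)) ≠ 0 := by
    intro h; apply_fun (Fin.val) at h; rw [hv1] at h; simp at h
  set f := (1 : Fin (l+2)).succAbove with hfdef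
  have key : ∀ x : Fin (l+1), ((f x : Fin (l+2)) : ℕ)
      = if (x:ℕ) = 0 then 0 else (x:ℕ)+1 := coe_succAbove_one l
  have hf0 : f 0 = 0 := Fin.ext (by rw [key]; simp)
  have hf1 : ((f 1 : Fin (l+2)) : ℕ) = 2 := by rw [key, hv1]; simp
  -- clean entry lemmas
  have EM : ∀ i j : Fin (l+2), M i j =
      (if (i : ℕ) = 0 then
        (if (j : ℕ) = 0 then u else if (j : ℕ) = 2 then -u else 0)
      else if (i : ℕ) = 1 then
        (if (j : ℕ) = 0 then -1 else if (j : ℕ) = 1 then v else 0)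
      else
        (if h0 : (j : ℕ) = 0 then β ⟨(i : ℕ) - 2, by omega⟩
         else if h1 : (j : ℕ) = 1 then 0
         else if h2 : (j : ℕ) = 2 then γ ⟨(i : ℕ) - 2, by omega⟩
         else A ⟨(i : ℕ) - 2, by omega⟩ ⟨(j : ℕ) - 3, by omega⟩)) := by
    intro i j; rw [hM]; rfl
  have EM' : ∀ i j : Fin l, M' i j =
      (if h : (j : ℕ) = 0 then β i + γ i else A i ⟨(j : ℕ) - 1, by omega⟩) := by
    intro i j; rw [hM']; rfl
  have hM0 : ∀ q : Fin (l+2), M 0 q =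
      if (q : ℕ) = 0 then u else if (q : ℕ) = 2 then -u else 0 := by
    intro q; rw [EM]; simp
  have hMrow : ∀ (p : Fin (l+2)) (i' : Fin l) (hp : (p:ℕ) = (i':ℕ)+2) (q : Fin (l+2)),
      M p q = if h0 : (q:ℕ) = 0 then β i'
        else if h1 : (q:ℕ) = 1 then 0
        else if h2 : (q:ℕ) = 2 then γ i'
        else A i' ⟨(q:ℕ)-3, by omega⟩ := by
    intro p i' hp q
    rw [EM, if_neg (by omega), if_neg (by omega)]
    have hi : (⟨(p:ℕ)-2, by omega⟩ : Fin l) = i' := Fin.ext (by simp [hp])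
    rw [hi]
  have hM11 : M 1 1 = v := by rw [EM]; norm_num
  rw [Matrix.det_succ_column M 1, Finset.sum_eq_single (1 : Fin (l+2))]
  · -- main term
    set N := M.submatrix f f with hN
    have hMain : N.det = u * M'.det := by
      rw [← Matrix.det_updateCol_add_self N h10]
      set N' := N.updateCol 1 (fun k => N k 1 + N k 0) with hN'
      have hN'00 : N' 0 0 = u := by
        rw [hN', Matrix.updateCol_apply, if_neg h10.symm, hN, Matrix.submatrix_apply,
          hf0, hM0]
        simp
      have hQ : N'.submatrix Fin.succ (0 : Fin (l+1)).succAbove = M' := by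
        funext i j
        rw [Matrix.submatrix_apply, Fin.succAbove_zero]
        have hfi : ((f i.succ : Fin (l+2)) : ℕ) = (i:ℕ) + 2 := by rw [key]; simp
        by_cases hj : (j : ℕ) = 0
        · have hj1 : j.succ = (1 : Fin (l+1)) := Fin.ext (by rw [Fin.val_succ, hv1, hj])
          rw [hN', Matrix.updateCol_apply, if_pos hj1, hN, Matrix.submatrix_apply,
            Matrix.submatrix_apply, hf0, hMrow _ i hfi, hMrow _ i hfi]
          rw [dif_neg (by omega), dif_neg (by omega), dif_pos hf1, EM', dif_pos hj]
          simp only [Fin.val_zero]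
          simp only [↓reduceDIte]
          ring
        · have hj1 : j.succ ≠ (1 : Fin (l+1)) := by
            intro h; apply_fun Fin.val at h; rw [hv1, Fin.val_succ] at h; omega
          have hfj : ((f j.succ : Fin (l+2)) : ℕ) = (j:ℕ) + 2 := by
            rw [key]; simp [Fin.val_succ, hj]
          rw [hN', Matrix.updateCol_apply, if_neg hj1, hN, Matrix.submatrix_apply,
            hMrow _ i hfi, dif_neg (by omega), dif_neg (by omega), dif_neg (by omega),
            EM', dif_neg hj]
          have he : (⟨((f j.succ : Fin (l+2)) : ℕ) - 3, by omega⟩ : Fin (l-1))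
              = ⟨(j:ℕ)-1, by omega⟩ := by rw [Fin.mk_eq_mk]; omega
          rw [he]
      rw [Matrix.det_succ_row_zero, Finset.sum_eq_single (0 : Fin (l+1))]
      · rw [hQ, hN'00]
        simp
      · intro b _ hb
        have hb' : (b : ℕ) ≠ 0 := fun h => hb (Fin.ext h)
        have hz : N' 0 b = 0 := by
          by_cases hb1 : b = 1
          · subst hb1
            rw [hN', Matrix.updateCol_apply, if_pos rfl, hN, Matrix.submatrix_apply,
              Matrix.submatrix_apply, hf0, hM0, hM0]
            rw [if_neg (by omega), if_pos hf1]
            simp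
          · have hb2 : (b : ℕ) ≠ 1 := by
              intro h; exact hb1 (Fin.ext (by rw [h, hv1]))
            have hfb : ((f b : Fin (l+2)) : ℕ) = (b:ℕ) + 1 := by rw [key]; simp [hb']
            rw [hN', Matrix.updateCol_apply, if_neg hb1, hN, Matrix.submatrix_apply,
              hf0, hM0, if_neg (by omega), if_neg (by omega)]
        rw [hz]
        simp
      · intro h; exact absurd (Finset.mem_univ _) h
    rw [hMain, hM11]
    simp only [Fin.val_one, smul_eq_mul]
    ring
  · intro b _ hb
    have hb' : (b : ℕ) ≠ 1 := by
      intro h; exact hb (Fin.ext (by simp [h]))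
    have hz : M b 1 = 0 := by
      rw [EM]
      norm_num
      exact fun _ h => absurd h hb'
    rw [hz]
    simp
  · intro h; exact absurd (Finset.mem_univ _) h
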